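/- Let d >= 2, let v_1, ..., v_d be affinely independent points of R^d, let Sigma be their convex hull (a (d-1)-dimensional simplex in R^d), and let lambda in R^d satisfy <lambda, v_j> > 0 for every j. Then \int_Sigma <lambda, x>^{-d} d mu(x) = mu(Sigma) / (prod_{j=1}^d <lambda, v_j>), where mu is the (d-1)-dimensional Hausdorff measure on R^d. (This is the classical simplex integral formula, used in the paper's proof of the Kerckhoff lemma for the simplices Delta^i triangulating H_tau.) -/

import Mathlib

open MeasureTheory Set Pointwise
open scoped ENNReal

/-- Integral of `t ^ n` over `Ioc 0 b`. -/
lemma lintegral_pow_Ioc (n : ℕ) {b : ℝ} (hb : 0 ≤ b) :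
    ∫⁻ t in Set.Ioc 0 b, ENNReal.ofReal (t ^ n) ∂volume
      = ENNReal.ofReal (b ^ (n + 1) / (n + 1)) := by
  rw [← ofReal_integral_eq_lintegral_ofReal]
  · rw [← intervalIntegral.integral_of_le hb, integral_pow]
    norm_num
  · exact (intervalIntegrable_iff_integrableOn_Ioc_of_le hb).mp
      (intervalIntegral.intervalIntegrable_pow n)
  · filter_upwards [ae_restrict_mem measurableSet_Ioc] with t ht
    exact pow_nonneg ht.1.le n

/-- Membership in the convex hull of a finite family, as convex combinations. -/
lemma mem_convexHull_range_iff {E : Type*} [AddCommGroup E] [Module ℝ E]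
    {m : ℕ} (u : Fin m → E) (x : E) :
    x ∈ convexHull ℝ (Set.range u) ↔
      ∃ w : Fin m → ℝ, (∀ j, 0 ≤ w j) ∧ ∑ j, w j = 1 ∧ ∑ j, w j • u j = x := by
  constructor
  · intro hx
    rw [convexHull_range_eq_exists_affineCombination] at hx
    obtain ⟨s, w, hw0, hw1, rfl⟩ := hx
    refine ⟨fun j => if j ∈ s then w j else 0, ?_, ?_, ?_⟩
    · intro j
      by_cases h : j ∈ s <;> simp [h, hw0 j]
    · rw [Finset.sum_ite_mem, Finset.univ_inter, hw1]
    · rw [Finset.affineCombination_eq_linear_combination s u w hw1]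
      rw [← Finset.sum_filter_of_ne (p := fun j => j ∈ s) ?_]
      · rw [show Finset.univ.filter (fun j => j ∈ s) = s by simp]
        exact Finset.sum_congr rfl fun j hj => by simp [hj]
      · intro j _ h
        by_contra hj
        simp [hj] at h
  · rintro ⟨w, hw0, hw1, rfl⟩
    rw [← Finset.univ.affineCombination_eq_linear_combination u w hw1]
    exact affineCombination_mem_convexHull (fun i _ => hw0 i) hw1

section ConeVolume

variable {E : Type*} [NormedAddCommGroup E] [NormedSpace ℝ E] [MeasurableSpace E]
  [BorelSpace E] [FiniteDimensional ℝ E]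

lemma affine_decomp (g : E →ᵃ[ℝ] ℝ) (x : E) : g x = g.linear x + g 0 := by
  conv_lhs => rw [show x = x +ᵥ (0 : E) by simp, g.map_vadd]
  rfl

/-- The volume of the "cone" over a set `K`, truncated by the homogenization of an
affine functional `g` positive on `K`. -/
lemma cone_volume (μ : Measure E) [μ.IsAddHaarMeasure] {n : ℕ}
    (hE : Module.finrank ℝ E = n) {K : Set E} (hK : MeasurableSet K)
    (g : E →ᵃ[ℝ] ℝ) (hg : ∀ x ∈ K, 0 < g x) :
    (volume : Measure ℝ).prod μ
        {p : ℝ × E | 0 < p.1 ∧ p.1⁻¹ • p.2 ∈ K ∧ g 0 * p.1 + g.linear p.2 ≤ 1}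
      = ENNReal.ofReal ((n + 1 : ℝ))⁻¹ * ∫⁻ x in K, ENNReal.ofReal ((g x ^ (n + 1))⁻¹) ∂μ := by
  have hgl : Continuous g.linear := g.linear.continuous_of_finiteDimensional
  have hgc : Continuous g := g.continuous_of_finiteDimensional
  set C : Set (ℝ × E) :=
    {p : ℝ × E | 0 < p.1 ∧ p.1⁻¹ • p.2 ∈ K ∧ g 0 * p.1 + g.linear p.2 ≤ 1} with hCdef
  have hC : MeasurableSet C := by
    apply MeasurableSet.inter
    · exact measurableSet_lt measurable_const measurable_fst
    apply MeasurableSet.inter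
    · exact (measurable_fst.inv.smul measurable_snd) hK
    · exact measurableSet_le
        (((continuous_const.mul continuous_fst).add (hgl.comp continuous_snd)).measurable)
        measurable_const
  -- the Fubini slice computation
  rw [Measure.prod_apply hC]
  have hslice : ∀ t : ℝ,
      μ (Prod.mk t ⁻¹' C) = (Ioi (0:ℝ)).indicator
        (fun t => ENNReal.ofReal (t ^ n) * μ (K ∩ {y | t * g y ≤ 1})) t := by
    intro t
    rcases le_or_gt t 0 with ht | ht
    · have : Prod.mk t ⁻¹' C = ∅ := by
        ext z; simp only [hCdef, mem_preimage, mem_setOf_eq, mem_empty_iff_false, iff_false]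
        intro h; exact absurd h.1 (not_lt.mpr ht)
      rw [this, indicator_of_notMem (by simpa using ht)]
      simp
    · have hset : Prod.mk t ⁻¹' C = t • (K ∩ {y | t * g y ≤ 1}) := by
        ext z
        rw [mem_smul_set_iff_inv_smul_mem₀ ht.ne']
        have hgz : t * g (t⁻¹ • z) = g 0 * t + g.linear z := by
          rw [affine_decomp g (t⁻¹ • z), g.linear.map_smul]
          simp only [smul_eq_mul]
          field_simp
          ring
        simp only [hCdef, mem_preimage, mem_setOf_eq, mem_inter_iff, ht, true_and, hgz]
      rw [hset, Measure.addHaar_smul, hE, indicator_of_mem (mem_Ioi.mpr ht),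
        abs_of_nonneg (pow_nonneg ht.le n)]
  simp_rw [hslice]
  rw [lintegral_indicator measurableSet_Ioi]
  -- rewrite inner measure as an integral over K of an indicator
  set T : Set (ℝ × E) := {q : ℝ × E | q.1 * g q.2 ≤ 1} with hTdef
  have hT : MeasurableSet T :=
    measurableSet_le ((continuous_fst.mul (hgc.comp continuous_snd)).measurable) measurable_const
  have hmeas : ∀ t : ℝ, μ (K ∩ {y | t * g y ≤ 1})
      = ∫⁻ y in K, T.indicator (1 : ℝ × E → ℝ≥0∞) (t, y) ∂μ := by
    intro t
    have h1 : MeasurableSet {y : E | t * g y ≤ 1} :=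
      measurableSet_le ((continuous_const.mul hgc).measurable) measurable_const
    have : ∀ y : E, T.indicator (1 : ℝ × E → ℝ≥0∞) (t, y) = {y : E | t * g y ≤ 1}.indicator (1 : E → ℝ≥0∞) y := by
      intro y
      by_cases h : t * g y ≤ 1
      · rw [indicator_of_mem (by exact h), indicator_of_mem (by exact h)]
        rfl
      · rw [indicator_of_notMem (by exact h), indicator_of_notMem (by exact h)]
    simp_rw [this]
    rw [lintegral_indicator h1, Measure.restrict_restrict h1]
    simp [inter_comm]
  have hpull : ∀ t : ℝ, (ENNReal.ofReal (t ^ n) * ∫⁻ y in K, T.indicator (1 : ℝ × E → ℝ≥0∞) (t, y) ∂μ)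
      = ∫⁻ y in K, ENNReal.ofReal (t ^ n) * T.indicator (1 : ℝ × E → ℝ≥0∞) (t, y) ∂μ := fun t =>
    (lintegral_const_mul' _ _ (by simp)).symm
  simp_rw [hmeas, hpull]
  -- swap the two integrals
  rw [lintegral_lintegral_swap]
  swap
  · apply Measurable.aemeasurable
    exact ((measurable_fst.pow_const n).ennreal_ofReal).mul
      ((measurable_one.indicator hT).comp measurable_id)
  -- compute the inner integral
  rw [setLIntegral_congr_fun_ae hK (ae_of_all _ (fun y hy => ?_)),
    lintegral_const_mul' _ _ (by simp : ENNReal.ofReal _ ≠ ⊤)]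
  have hgy : 0 < g y := hg y hy
  have hinner : ∀ t : ℝ, ENNReal.ofReal (t ^ n) * T.indicator (1 : ℝ × E → ℝ≥0∞) (t, y)
      = (Iic (g y)⁻¹).indicator (fun t => ENNReal.ofReal (t ^ n)) t := by
    intro t
    have hiff : (t, y) ∈ T ↔ t ∈ Iic (g y)⁻¹ := by
      simp only [hTdef, mem_setOf_eq, mem_Iic]
      rw [inv_eq_one_div, le_div_iff₀ hgy]
    by_cases h : (t, y) ∈ T
    · rw [indicator_of_mem h, indicator_of_mem (hiff.mp h)]
      simp
    · rw [indicator_of_notMem h, indicator_of_notMem (fun hc => h (hiff.mpr hc))]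
      simp
  simp_rw [hinner]
  rw [lintegral_indicator measurableSet_Iic, Measure.restrict_restrict measurableSet_Iic,
    Iic_inter_Ioi, lintegral_pow_Ioc n (by positivity)]
  rw [div_eq_mul_inv, inv_pow, ENNReal.ofReal_mul (by positivity), mul_comm]

end ConeVolume

section Core

variable {E : Type*} [NormedAddCommGroup E] [NormedSpace ℝ E] [MeasurableSpace E]
  [BorelSpace E] [FiniteDimensional ℝ E]

/-- The simplex integral formula for a full-dimensional simplex with respect to any
additive Haar measure. -/
lemma simplex_lintegral_core (μ : Measure E) [μ.IsAddHaarMeasure] {n : ℕ}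
    (hE : Module.finrank ℝ E = n) (u : Fin (n + 1) → E) (hu : AffineIndependent ℝ u)
    (f : E →ᵃ[ℝ] ℝ) (ha : ∀ j, 0 < f (u j)) :
    ∫⁻ x in convexHull ℝ (Set.range u), ENNReal.ofReal ((f x ^ (n + 1))⁻¹) ∂μ
      = μ (convexHull ℝ (Set.range u)) / ENNReal.ofReal (∏ j, f (u j)) := by
  set K := convexHull ℝ (Set.range u) with hKdef
  have hKm : MeasurableSet K :=
    ((Set.finite_range u).isCompact_convexHull ℝ).isClosed.measurableSet
  have hfK : ∀ x ∈ K, 0 < f x := by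
    intro x hx
    have hsub : K ⊆ f ⁻¹' Ioi 0 := convexHull_min
      (by rintro y ⟨j, rfl⟩; exact ha j) ((convex_Ioi (0 : ℝ)).affine_preimage f)
    exact hsub hx
  set aj : Fin (n + 1) → ℝ := fun j => f (u j) with hajdef
  -- the lifted vertices form a basis of `ℝ × E`
  set V : Fin (n + 1) → ℝ × E := fun j => (1, u j) with hVdef
  have hsum : ∀ s : Fin (n + 1) → ℝ, ∑ j, s j • V j = (∑ j, s j, ∑ j, s j • u j) := by
    intro s
    have h1 : (∑ j, s j • V j).1 = ∑ j, s j := by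
      rw [Prod.fst_sum]; simp [hVdef]
    have h2 : (∑ j, s j • V j).2 = ∑ j, s j • u j := by
      rw [Prod.snd_sum]; simp [hVdef]
    rw [Prod.ext_iff]; exact ⟨h1, h2⟩
  have hVli : LinearIndependent ℝ V := by
    rw [Fintype.linearIndependent_iff]
    intro c hc
    rw [hsum c, Prod.mk_eq_zero] at hc
    exact fun i => (affineIndependent_iff_of_fintype ℝ u).mp hu c hc.1
      (by rw [Finset.univ.weightedVSub_eq_linear_combination hc.1]; exact hc.2) i
  have hcard : Fintype.card (Fin (n + 1)) = Module.finrank ℝ (ℝ × E) := by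
    simp [Module.finrank_prod, hE, add_comm]
  set B := basisOfLinearIndependentOfCardEqFinrank hVli hcard with hBdef
  have hB : ∀ j, B j = V j := fun j => by
    rw [hBdef, coe_basisOfLinearIndependentOfCardEqFinrank]
  set w : Fin (n + 1) → ℝˣ := fun j => Units.mk0 (aj j)⁻¹ (inv_ne_zero (ha j).ne') with hwdef
  set M := B.equiv (B.unitsSMul w) (Equiv.refl _) with hMdef
  have hM : ∀ j, M (B j) = (aj j)⁻¹ • B j := by
    intro j
    rw [hMdef, Module.Basis.equiv_apply, Equiv.refl_apply, Module.Basis.unitsSMul_apply]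
    rfl
  -- determinant of `M`
  have hdet : LinearMap.det (M : (ℝ × E) →ₗ[ℝ] (ℝ × E)) = ∏ j, (aj j)⁻¹ := by
    rw [← LinearMap.det_toMatrix B]
    have hmat : LinearMap.toMatrix B B (M : (ℝ × E) →ₗ[ℝ] (ℝ × E))
        = Matrix.diagonal fun j => (aj j)⁻¹ := by
      ext i j
      rw [LinearMap.toMatrix_apply, LinearEquiv.coe_coe, hM j, _root_.map_smul, B.repr_self,
        Matrix.diagonal_apply]
      by_cases h : i = j
      · subst h; simp
      · simp [Finsupp.single_apply, h, Ne.symm h]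
    rw [hmat, Matrix.det_diagonal]
  -- the cone over the simplex
  set P : Set (ℝ × E) := {p | 0 < p.1 ∧ p.1⁻¹ • p.2 ∈ K} with hPdef
  have hPdesc : ∀ p : ℝ × E, p ∈ P ↔
      ∃ s : Fin (n + 1) → ℝ, (∀ j, 0 ≤ s j) ∧ 0 < ∑ j, s j ∧ p = ∑ j, s j • V j := by
    intro p
    constructor
    · rintro ⟨ht, hz⟩
      obtain ⟨w', hw0, hw1, hwx⟩ := (mem_convexHull_range_iff u _).mp hz
      refine ⟨fun j => p.1 * w' j, fun j => mul_nonneg ht.le (hw0 j), ?_, ?_⟩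
      · rw [← Finset.mul_sum, hw1, mul_one]; exact ht
      · rw [hsum, ← Finset.mul_sum, hw1, mul_one]
        have : ∑ j, (p.1 * w' j) • u j = p.1 • ∑ j, w' j • u j := by
          rw [Finset.smul_sum]; exact Finset.sum_congr rfl fun j _ => by rw [smul_smul]
        rw [this, hwx, smul_inv_smul₀ ht.ne']
    · rintro ⟨s, hs0, hssum, rfl⟩
      rw [hPdef, mem_setOf_eq, hsum]
      refine ⟨hssum, ?_⟩
      rw [mem_convexHull_range_iff]
      refine ⟨fun j => (∑ i, s i)⁻¹ * s j, fun j => mul_nonneg (inv_nonneg.mpr hssum.le) (hs0 j), ?_, ?_⟩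
      · rw [← Finset.mul_sum, inv_mul_cancel₀ hssum.ne']
      · rw [Finset.smul_sum]
        exact Finset.sum_congr rfl fun j _ => by rw [smul_smul]
  have hMsum : ∀ s : Fin (n + 1) → ℝ,
      M (∑ j, s j • V j) = ∑ j, (s j * (aj j)⁻¹) • V j := by
    intro s
    rw [map_sum]
    refine Finset.sum_congr rfl fun j _ => ?_
    rw [_root_.map_smul, ← hB j, hM j, hB j, smul_smul]
  have hpos_exists : ∀ s : Fin (n + 1) → ℝ, (∀ j, 0 ≤ s j) → 0 < ∑ j, s j →
      ∃ j, 0 < s j := by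
    intro s hs0 hsum'
    by_contra h
    push_neg at h
    have : ∀ j, s j = 0 := fun j => le_antisymm (h j) (hs0 j)
    simp [this] at hsum'
  have hMP : M '' P = P := by
    apply Subset.antisymm
    · rintro q ⟨p, hp, rfl⟩
      obtain ⟨s, hs0, hssum, rfl⟩ := (hPdesc p).mp hp
      rw [hPdesc, ]
      refine ⟨fun j => s j * (aj j)⁻¹, fun j => mul_nonneg (hs0 j) (inv_nonneg.mpr (ha j).le), ?_,
        (hMsum s)⟩
      obtain ⟨j0, hj0⟩ := hpos_exists s hs0 hssum
      exact Finset.sum_pos' (fun j _ => mul_nonneg (hs0 j) (inv_nonneg.mpr (ha j).le))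
        ⟨j0, Finset.mem_univ j0, mul_pos hj0 (inv_pos.mpr (ha j0))⟩
    · intro p hp
      obtain ⟨s, hs0, hssum, rfl⟩ := (hPdesc p).mp hp
      refine ⟨∑ j, (s j * aj j) • V j, ?_, ?_⟩
      · rw [hPdesc]
        refine ⟨fun j => s j * aj j, fun j => mul_nonneg (hs0 j) (ha j).le, ?_, rfl⟩
        obtain ⟨j0, hj0⟩ := hpos_exists s hs0 hssum
        exact Finset.sum_pos' (fun j _ => mul_nonneg (hs0 j) (ha j).le)
          ⟨j0, Finset.mem_univ j0, mul_pos hj0 (ha j0)⟩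
      · rw [hMsum]
        refine Finset.sum_congr rfl fun j _ => ?_
        rw [mul_assoc, mul_inv_cancel₀ (ha j).ne', mul_one]
  -- the homogenized functional
  set lin : (ℝ × E) →ₗ[ℝ] ℝ :=
    f 0 • LinearMap.fst ℝ ℝ E + f.linear ∘ₗ LinearMap.snd ℝ ℝ E with hlindef
  have hlin : ∀ p : ℝ × E, lin p = f 0 * p.1 + f.linear p.2 := by
    intro p; simp [hlindef, smul_eq_mul]
  have hlinM : ∀ p : ℝ × E, lin (M p) = p.1 := by
    have hcomp : lin ∘ₗ (M : (ℝ × E) →ₗ[ℝ] (ℝ × E)) = LinearMap.fst ℝ ℝ E := by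
      apply B.ext
      intro j
      rw [LinearMap.comp_apply, LinearEquiv.coe_coe, hM j, _root_.map_smul, hB j, smul_eq_mul,
        hlin]
      have : f 0 * (V j).1 + f.linear (V j).2 = aj j := by
        simp only [hVdef, hajdef]
        rw [affine_decomp f (u j)]; ring
      rw [this, inv_mul_cancel₀ (ha j).ne']
      simp [hVdef]
    intro p
    have := congrFun (congrArg (fun (g : (ℝ × E) →ₗ[ℝ] ℝ) => (g : ℝ × E → ℝ)) hcomp) p
    simpa using this
  have hPsymm : ∀ q, M.symm q ∈ P ↔ q ∈ P := by
    intro q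
    conv_rhs => rw [← hMP, LinearEquiv.image_eq_preimage_symm]
    rfl
  -- image of the unit cone
  have himg : {p : ℝ × E | 0 < p.1 ∧ p.1⁻¹ • p.2 ∈ K ∧ f 0 * p.1 + f.linear p.2 ≤ 1}
      = M '' {p : ℝ × E | 0 < p.1 ∧ p.1⁻¹ • p.2 ∈ K ∧ p.1 ≤ 1} := by
    have e1 : {p : ℝ × E | 0 < p.1 ∧ p.1⁻¹ • p.2 ∈ K ∧ f 0 * p.1 + f.linear p.2 ≤ 1}
        = P ∩ {p | lin p ≤ 1} := by
      ext p; simp only [mem_setOf_eq, mem_inter_iff, hPdef, hlin]; tauto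
    have e2 : {p : ℝ × E | 0 < p.1 ∧ p.1⁻¹ • p.2 ∈ K ∧ p.1 ≤ 1}
        = P ∩ {p | p.1 ≤ 1} := by
      ext p; simp only [mem_setOf_eq, mem_inter_iff, hPdef]; tauto
    rw [e1, e2, LinearEquiv.image_eq_preimage_symm]
    ext q
    simp only [mem_inter_iff, mem_preimage, mem_setOf_eq]
    constructor
    · rintro ⟨hq, hlq⟩
      refine ⟨(hPsymm q).mpr hq, ?_⟩
      have := hlinM (M.symm q)
      rw [M.apply_symm_apply] at this
      rw [← this]; exact hlq
    · rintro ⟨hq, hlq⟩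
      refine ⟨(hPsymm q).mp hq, ?_⟩
      have := hlinM (M.symm q)
      rw [M.apply_symm_apply] at this
      rw [this]; exact hlq
  -- apply the cone volume computation twice
  have hcone1 := cone_volume μ hE hKm (AffineMap.const ℝ E (1 : ℝ)) (fun x _ => one_pos)
  have hconef := cone_volume μ hE hKm f hfK
  simp only [AffineMap.const_apply, AffineMap.const_linear, LinearMap.zero_apply, one_mul,
    add_zero, one_pow, inv_one, ENNReal.ofReal_one] at hcone1
  rw [lintegral_one, Measure.restrict_apply MeasurableSet.univ, univ_inter] at hcone1
  rw [himg] at hconef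
  have himgvol : (volume : Measure ℝ).prod μ
      ((M : (ℝ × E) →ₗ[ℝ] (ℝ × E)) '' {p : ℝ × E | 0 < p.1 ∧ p.1⁻¹ • p.2 ∈ K ∧ p.1 ≤ 1})
      = ENNReal.ofReal |LinearMap.det (M : (ℝ × E) →ₗ[ℝ] (ℝ × E))|
          * (volume : Measure ℝ).prod μ {p : ℝ × E | 0 < p.1 ∧ p.1⁻¹ • p.2 ∈ K ∧ p.1 ≤ 1} :=
    Measure.addHaar_image_linearMap _ _ _
  rw [show (M '' {p : ℝ × E | 0 < p.1 ∧ p.1⁻¹ • p.2 ∈ K ∧ p.1 ≤ 1})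
      = ((M : (ℝ × E) →ₗ[ℝ] (ℝ × E)) '' {p : ℝ × E | 0 < p.1 ∧ p.1⁻¹ • p.2 ∈ K ∧ p.1 ≤ 1})
    from rfl, himgvol, hcone1, hdet] at hconef
  -- final bookkeeping
  have hprodpos : 0 < ∏ j, aj j := Finset.prod_pos fun j _ => ha j
  have habs : |∏ j, (aj j)⁻¹| = (∏ j, aj j)⁻¹ := by
    rw [← Finset.prod_inv_distrib]
    exact abs_of_pos (Finset.prod_pos fun j _ => inv_pos.mpr (ha j))
  rw [habs] at hconef
  have hcf0 : (ENNReal.ofReal ((n + 1 : ℝ))⁻¹) ≠ 0 := by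
    simp only [ne_eq, ENNReal.ofReal_eq_zero, not_le]
    positivity
  have hcftop : (ENNReal.ofReal ((n + 1 : ℝ))⁻¹) ≠ ⊤ := ENNReal.ofReal_ne_top
  have key : ∫⁻ x in K, ENNReal.ofReal ((f x ^ (n + 1))⁻¹) ∂μ
      = ENNReal.ofReal (∏ j, aj j)⁻¹ * μ K := by
    rw [← ENNReal.mul_right_inj hcf0 hcftop, ← hconef]
    ring
  rw [key, ENNReal.ofReal_inv_of_pos hprodpos, ENNReal.div_eq_inv_mul]

end Core

open scoped RealInnerProductSpace

/-- The classical simplex integral formula: if `v₁, …, v_d` are affinely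
independent points of `ℝ^d`, `Σ` is their convex hull, and `λ ∈ ℝ^d` satisfies
`⟪λ, vⱼ⟫ > 0` for all `j`, then
`∫_Σ ⟪λ, x⟫⁻ᵈ dμ(x) = μ(Σ) / ∏ⱼ ⟪λ, vⱼ⟫`,
where `μ` is `(d-1)`-dimensional Hausdorff measure. -/
theorem integral_simplex_inner_inv_pow (d : ℕ) (hd : 2 ≤ d)
    (v : Fin d → EuclideanSpace ℝ (Fin d)) (hv : AffineIndependent ℝ v)
    (lam : EuclideanSpace ℝ (Fin d)) (hpos : ∀ j, 0 < ⟪lam, v j⟫) :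
    ∫⁻ x in convexHull ℝ (Set.range v),
        ENNReal.ofReal ((⟪lam, x⟫ ^ d)⁻¹)
          ∂(μH[(d : ℝ) - 1] : Measure (EuclideanSpace ℝ (Fin d)))
      = μH[(d : ℝ) - 1] (convexHull ℝ (Set.range v))
          / ENNReal.ofReal (∏ j, ⟪lam, v j⟫) := by
  obtain ⟨n, rfl⟩ : ∃ n, d = n + 1 := ⟨d - 1, by omega⟩
  rw [show ((n + 1 : ℕ) : ℝ) - 1 = (n : ℝ) by push_cast; ring]
  set W := vectorSpan ℝ (Set.range v) with hWdef
  have hW : Module.finrank ℝ W = n :=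
    hv.finrank_vectorSpan (by simp : Fintype.card (Fin (n + 1)) = n + 1)
  set L : EuclideanSpace ℝ (Fin n) ≃ₗᵢ[ℝ] W := ((stdOrthonormalBasis ℝ W).reindex (finCongr hW)).repr.symm
    with hLdef
  set j0 : Fin (n + 1) := 0 with hj0def
  set ι : EuclideanSpace ℝ (Fin n) → EuclideanSpace ℝ (Fin (n + 1)) := fun x => v j0 + ((L x : W) : EuclideanSpace ℝ (Fin (n + 1))) with hιdef
  have hι : Isometry ι := by
    apply Isometry.of_dist_eq
    intro a b
    rw [hιdef]
    simp only
    rw [dist_add_left, ← Subtype.dist_eq, L.dist_map]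
  set ιA : EuclideanSpace ℝ (Fin n) →ᵃ[ℝ] EuclideanSpace ℝ (Fin (n + 1)) :=
    { toFun := ι
      linear := W.subtype ∘ₗ L.toLinearIsometry.toLinearMap
      map_vadd' := by
        intro p vv
        simp only [hιdef, LinearMap.comp_apply, Submodule.coe_subtype,
          LinearIsometry.coe_toLinearMap, LinearIsometryEquiv.coe_toLinearIsometry]
        rw [show vv +ᵥ p = vv + p from rfl, map_add, vadd_eq_add]
        push_cast
        abel } with hιAdef
  have hmem : ∀ j, v j - v j0 ∈ W := fun j =>
    vsub_mem_vectorSpan ℝ (Set.mem_range_self j) (Set.mem_range_self j0)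
  set u : Fin (n + 1) → EuclideanSpace ℝ (Fin n) := fun j => L.symm ⟨v j - v j0, hmem j⟩ with hudef
  have hιu : ∀ j, ι (u j) = v j := by
    intro j
    have hLL : L (L.symm ⟨v j - v j0, hmem j⟩) = ⟨v j - v j0, hmem j⟩ :=
      L.apply_symm_apply _
    rw [hιdef]
    simp only [hudef, hLL]
    abel
  have huv : v = ⇑ιA ∘ u := funext fun j => by
    rw [Function.comp_apply, show ιA (u j) = ι (u j) from rfl, hιu]
  have hu : AffineIndependent ℝ u := by
    rw [huv] at hv
    exact hv.of_comp ιA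
  set K' := convexHull ℝ (Set.range u) with hK'def
  have himgK : convexHull ℝ (Set.range v) = ι '' K' := by
    rw [huv, Set.range_comp, ← AffineMap.image_convexHull]
    rfl
  have hKm' : MeasurableSet K' :=
    ((Set.finite_range u).isCompact_convexHull ℝ).isClosed.measurableSet
  have hn0 : (0 : ℝ) ≤ (n : ℝ) := by positivity
  have hmap : Measure.map ι ((μH[(n : ℝ)] : Measure (EuclideanSpace ℝ (Fin n))).restrict K')
      = (μH[(n : ℝ)] : Measure (EuclideanSpace ℝ (Fin (n + 1)))).restrict (ι '' K') := by
    ext A hA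
    rw [Measure.map_apply hι.continuous.measurable hA,
      Measure.restrict_apply (hι.continuous.measurable hA), Measure.restrict_apply hA]
    have himg : A ∩ ι '' K' = ι '' (ι ⁻¹' A ∩ K') := by
      rw [Set.inter_comm (ι ⁻¹' A) K', Set.image_inter_preimage, Set.inter_comm]
    rw [himg, hι.hausdorffMeasure_image (Or.inl hn0)]
  -- Haar instance for Hausdorff measure on `En`
  haveI : (μH[(n : ℝ)] : Measure (EuclideanSpace ℝ (Fin n))).IsAddHaarMeasure := by
    rw [show (n : ℝ) = ((Module.finrank ℝ (EuclideanSpace ℝ (Fin n)) : ℕ) : ℝ) by simp]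
    infer_instance
  -- the affine functional
  set f : EuclideanSpace ℝ (Fin n) →ᵃ[ℝ] ℝ := ((innerSL ℝ lam).toLinearMap.toAffineMap).comp ιA with hfdef
  have hf : ∀ x, f x = ⟪lam, ι x⟫ := fun x => rfl
  have haj : ∀ j, 0 < f (u j) := fun j => by rw [hf, hιu]; exact hpos j
  have hFmeas : Measurable fun x : EuclideanSpace ℝ (Fin (n + 1)) =>
      ENNReal.ofReal ((⟪lam, x⟫ ^ (n + 1))⁻¹) := by
    have hc : Continuous fun x : EuclideanSpace ℝ (Fin (n + 1)) => ⟪lam, x⟫ :=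
      continuous_const.inner continuous_id
    exact ((hc.measurable.pow_const (n + 1)).inv).ennreal_ofReal
  rw [himgK, ← hmap, lintegral_map hFmeas hι.continuous.measurable,
    hι.hausdorffMeasure_image (Or.inl hn0)]
  have hcore := simplex_lintegral_core
    (μH[(n : ℝ)] : Measure (EuclideanSpace ℝ (Fin n))) (by simp) u hu f haj
  have hintegrand : ∀ y : EuclideanSpace ℝ (Fin n), ENNReal.ofReal ((⟪lam, ι y⟫ ^ (n + 1))⁻¹)
      = ENNReal.ofReal ((f y ^ (n + 1))⁻¹) := fun y => by rw [hf]
  simp_rw [hintegrand]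
  rw [hcore]
  congr 1
  rw [show (∏ j, ⟪lam, v j⟫) = ∏ j, f (u j) from
    Finset.prod_congr rfl fun j _ => by rw [hf, hιu]]
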